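/- For the complete bipartite graph K_{n,m} with path metric and p such that (n−1)(m−1)·4^p ≠ nm, the inverse of the p-distance matrix D_p exists and ⟨D_p^{-1} 1, 1⟩ = ((2nm−n−m)·2^p − 2nm) / ((n−1)(m−1)·4^p − nm). -/

import Mathlib

open Matrix

private lemma vvT_mul {N : ℕ} (a b c d : Fin N → ℝ) :
    vecMulVec a b * vecMulVec c d = (b ⬝ᵥ c) • vecMulVec a d := by
  ext i j
  simp only [Matrix.mul_apply, vecMulVec_apply, Matrix.smul_apply, dotProduct, smul_eq_mul,
    Finset.sum_mul]
  exact Finset.sum_congr rfl fun k _ => by ring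

private lemma vvT_mulVec {N : ℕ} (a b x : Fin N → ℝ) :
    (vecMulVec a b).mulVec x = (b ⬝ᵥ x) • a := by
  ext i
  simp only [Matrix.mulVec, vecMulVec_apply, dotProduct, Pi.smul_apply, smul_eq_mul,
    Finset.sum_mul]
  exact Finset.sum_congr rfl fun k _ => by ring

theorem bipartite_inverse_ones {n m : ℕ} (hn : 1 ≤ n) (hm : 1 ≤ m)
    (D : ℝ → Matrix (Fin (n + m)) (Fin (n + m)) ℝ)
    (hD : ∀ p i j, D p i j =
      if i = j then 0 else if ((i : ℕ) < n ↔ (j : ℕ) < n) then (2 : ℝ) ^ p else 1)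
    (p : ℝ) (hp : 0 ≤ p)
    (h : ((n : ℝ) - 1) * ((m : ℝ) - 1) * (4 : ℝ) ^ p ≠ (n : ℝ) * m) :
    IsUnit (D p) ∧
      (D p)⁻¹.mulVec 1 ⬝ᵥ 1 =
        ((2 * (n : ℝ) * m - n - m) * (2 : ℝ) ^ p - 2 * n * m) /
          (((n : ℝ) - 1) * ((m : ℝ) - 1) * (4 : ℝ) ^ p - n * m) := by
  set t : ℝ := (2 : ℝ) ^ p with ht
  have ht0 : t ≠ 0 := by
    have : (0:ℝ) < t := Real.rpow_pos_of_pos (by norm_num) p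
    linarith
  have h4 : (4 : ℝ) ^ p = t ^ 2 := by
    rw [show (4:ℝ) = (2:ℝ)^(2:ℝ) by
        rw [show ((2:ℝ):ℝ) = ((2:ℕ):ℝ) by norm_num, Real.rpow_natCast]; norm_num,
      ← Real.rpow_natCast ((2:ℝ)^p) 2, ← Real.rpow_mul (by norm_num),
      ← Real.rpow_mul (by norm_num)]
    norm_num [mul_comm]
  have hΔ : ((n : ℝ) - 1) * ((m : ℝ) - 1) * t ^ 2 - (n : ℝ) * m ≠ 0 := by
    rw [← h4]; exact sub_ne_zero_of_ne h
  set u : Fin (n + m) → ℝ := fun k => if (k : ℕ) < n then 1 else 0 with hu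
  set v : Fin (n + m) → ℝ := fun k => if (k : ℕ) < n then 0 else 1 with hv
  have hcard : ∑ k : Fin (n + m), u k = n := by
    rw [hu, Fin.sum_univ_eq_sum_range (fun k => if k < n then (1:ℝ) else 0)]
    rw [Finset.sum_ite, Finset.sum_const, Finset.sum_const]
    have : (Finset.range (n + m)).filter (fun k => k < n) = Finset.range n := by
      ext k; simp; omega
    simp [this]
  have hcardv : ∑ k : Fin (n + m), v k = m := by
    have h1 : ∀ k : Fin (n + m), v k = 1 - u k := by
      intro k; by_cases hk : (k : ℕ) < n <;> simp [hu, hv, hk]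
    rw [Finset.sum_congr rfl fun k _ => h1 k, Finset.sum_sub_distrib, hcard,
      Finset.sum_const, Finset.card_univ, Fintype.card_fin]
    push_cast; ring
  have huu : u ⬝ᵥ u = (n : ℝ) := by
    rw [← hcard]
    exact Finset.sum_congr rfl fun k _ => by
      by_cases hk : (k : ℕ) < n <;> simp [hu, hk]
  have hvv : v ⬝ᵥ v = (m : ℝ) := by
    rw [← hcardv]
    exact Finset.sum_congr rfl fun k _ => by
      by_cases hk : (k : ℕ) < n <;> simp [hv, hk]
  have huv : u ⬝ᵥ v = (0 : ℝ) := by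
    apply Finset.sum_eq_zero; intro k _
    by_cases hk : (k : ℕ) < n <;> simp [hu, hv, hk]
  have hvu : v ⬝ᵥ u = (0 : ℝ) := by rw [dotProduct_comm]; exact huv
  have hu1 : u ⬝ᵥ (1 : Fin (n+m) → ℝ) = (n : ℝ) := by
    rw [← hcard]; exact Finset.sum_congr rfl fun k _ => by simp
  have hv1 : v ⬝ᵥ (1 : Fin (n+m) → ℝ) = (m : ℝ) := by
    rw [← hcardv]; exact Finset.sum_congr rfl fun k _ => by simp
  have h11 : (1 : Fin (n+m) → ℝ) ⬝ᵥ (1 : Fin (n+m) → ℝ) = (n : ℝ) + m := by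
    simp [dotProduct]
  have hDexpr : D p = t • vecMulVec u u + t • vecMulVec v v + vecMulVec u v + vecMulVec v u
      - t • (1 : Matrix (Fin (n+m)) (Fin (n+m)) ℝ) := by
    ext i j
    rw [hD]
    simp only [Matrix.sub_apply, Matrix.add_apply, Matrix.smul_apply, vecMulVec_apply,
      Matrix.one_apply, smul_eq_mul, hu, hv]
    by_cases hij : i = j
    · subst hij
      by_cases hi : (i : ℕ) < n <;> simp [hi]
    · by_cases hi : (i : ℕ) < n <;> by_cases hj : (j : ℕ) < n <;>
        simp [hij, hi, hj] <;> ring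
  have hΔ1 : t ^ 2 * ((m:ℝ) - 1) * ((n:ℝ) - 1) - (m:ℝ) * n ≠ 0 := by
    contrapose! hΔ; linarith
  have hΔ2 : t ^ 2 * ((n:ℝ) - 1) * ((m:ℝ) - 1) - (n:ℝ) * m ≠ 0 := by
    contrapose! hΔ; linarith
  have key : D p *
      (((t ^ 2 * ((m:ℝ) - 1) - (m:ℝ)) / (t * (((n:ℝ) - 1) * ((m:ℝ) - 1) * t ^ 2 - (n:ℝ) * (m:ℝ)))) •
          vecMulVec u u +
        ((t ^ 2 * ((n:ℝ) - 1) - (n:ℝ)) / (t * (((n:ℝ) - 1) * ((m:ℝ) - 1) * t ^ 2 - (n:ℝ) * (m:ℝ)))) •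
          vecMulVec v v +
        ((-1 : ℝ) / (((n:ℝ) - 1) * ((m:ℝ) - 1) * t ^ 2 - (n:ℝ) * (m:ℝ))) • vecMulVec u v +
        ((-1 : ℝ) / (((n:ℝ) - 1) * ((m:ℝ) - 1) * t ^ 2 - (n:ℝ) * (m:ℝ))) • vecMulVec v u -
        (1 / t) • (1 : Matrix (Fin (n+m)) (Fin (n+m)) ℝ)) = 1 := by
    rw [hDexpr]
    simp only [Matrix.add_mul, Matrix.sub_mul, Matrix.mul_add, Matrix.mul_sub,
      Matrix.smul_mul, Matrix.mul_smul, Matrix.one_mul, Matrix.mul_one,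
      vvT_mul, huu, hvv, huv, hvu, smul_smul]
    match_scalars <;> field_simp [ht0, hΔ] <;> ring
  have hInv := Matrix.inv_eq_right_inv key
  refine ⟨?_, ?_⟩
  · have : Invertible (D p) := invertibleOfRightInverse _ _ key
    exact isUnit_of_invertible _
  · rw [hInv, h4]
    simp only [Matrix.sub_mulVec, Matrix.add_mulVec, Matrix.smul_mulVec,
      vvT_mulVec, Matrix.one_mulVec, hu1, hv1]
    simp only [sub_dotProduct, add_dotProduct, smul_dotProduct, smul_eq_mul,
      hu1, hv1, h11]
    field_simp [ht0, hΔ]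
    ring
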